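/- arXiv:2509.06441 — 2 statements merged into one kernel-verified Lean document; each statement's English description precedes it below -/
import Mathlib

section
/- Let E ⊆ ℝⁿ be a measurable set, f : ℝⁿ → ℝⁿ a C¹ diffeomorphism, and set δ = max(‖f − Id‖_∞, ‖Jf − 1‖_∞), where Jf denotes the Jacobian determinant of f. Assume δ < 1. Then for any closed ball B = B(a,R), |ℒⁿ(B ∩ f(E)) − ℒⁿ(B ∩ E)| ≤ δ·(ωₙRⁿ + max(2ⁿωₙ, 2nωₙ(R+1)^{n−1})), where ℒⁿ is Lebesgue measure and ωₙ the volume of the n-dimensional unit ball. -/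
open MeasureTheory Metric

lemma aux_pow_sub_pow {a b : ℝ} (ha : 0 ≤ a) (hab : a ≤ b) (n : ℕ) :
    b ^ n - a ^ n ≤ n * (b - a) * b ^ (n - 1) := by
  induction n with
  | zero => simp
  | succ m ih =>
    rcases Nat.eq_zero_or_pos m with hm | hm
    · subst hm; simp
    · have hb : 0 ≤ b := ha.trans hab
      have hpow : b * b ^ (m - 1) = b ^ m := by
        rw [← pow_succ', Nat.sub_add_cancel hm]
      have ham : a ^ m ≤ b ^ m := pow_le_pow_left₀ ha hab m
      have hba : 0 ≤ b - a := by linarith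
      calc b ^ (m + 1) - a ^ (m + 1) = b * (b ^ m - a ^ m) + a ^ m * (b - a) := by ring
        _ ≤ b * ((m : ℝ) * (b - a) * b ^ (m - 1)) + b ^ m * (b - a) := by
            gcongr
        _ = ((m : ℝ) + 1) * (b - a) * (b * b ^ (m - 1)) + (b ^ m - b * b ^ (m-1)) * (b - a) := by
            ring
        _ = ((m + 1 : ℕ) : ℝ) * (b - a) * b ^ ((m + 1) - 1) := by
            rw [hpow]; push_cast; ring

/-- If `f` is a C¹ diffeomorphism of ℝⁿ with
`δ = max(‖f − Id‖_∞, ‖Jf − 1‖_∞) < 1`, then for any ball `B(a,R)`, `E` measurable,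
`|ℒⁿ(B ∩ f(E)) − ℒⁿ(B ∩ E)| ≤ δ(ωₙRⁿ + max(2ⁿωₙ, 2nωₙ(R+1)^{n−1}))`. -/
theorem stmt3 (n : ℕ) (hn : 1 ≤ n)
    (E : Set (EuclideanSpace ℝ (Fin n))) (hE : MeasurableSet E)
    (f : EuclideanSpace ℝ (Fin n) → EuclideanSpace ℝ (Fin n))
    (g : EuclideanSpace ℝ (Fin n) → EuclideanSpace ℝ (Fin n))
    (hf : ContDiff ℝ 1 f) (hg : ContDiff ℝ 1 g)
    (hfg : Function.LeftInverse g f) (hgf : Function.RightInverse g f)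
    (δ : ℝ) (hδ1 : ∀ x, ‖f x - x‖ ≤ δ)
    (hδ2 : ∀ x, |(fderiv ℝ f x).det - 1| ≤ δ)
    (hδlt : δ < 1)
    (a : EuclideanSpace ℝ (Fin n)) (R : ℝ) (hR : 0 < R)
    (ω : ℝ) (hω : ω = (volume (ball (0 : EuclideanSpace ℝ (Fin n)) 1)).toReal) :
    |(volume (closedBall a R ∩ f '' E)).toReal - (volume (closedBall a R ∩ E)).toReal|
      ≤ δ * (ω * R ^ n + max (2 ^ n * ω) (2 * n * ω * (R + 1) ^ (n - 1))) := by
  have hδ0 : 0 ≤ δ := le_trans (norm_nonneg _) (hδ1 a)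
  have hω0 : 0 ≤ ω := hω ▸ ENNReal.toReal_nonneg
  set s := f ⁻¹' (closedBall a R) ∩ E with hs_def
  have hfc : Continuous f := hf.continuous
  have hs : MeasurableSet s := (hfc.measurable measurableSet_closedBall).inter hE
  have hderiv : ∀ x ∈ s, HasFDerivWithinAt f (fderiv ℝ f x) s x := fun x _ =>
    ((hf.differentiable one_ne_zero) x).hasFDerivAt.hasFDerivWithinAt
  have hinj : Set.InjOn f s := hfg.injective.injOn
  have himg : f '' s = closedBall a R ∩ f '' E := by
    rw [hs_def, Set.image_inter hfg.injective, Set.image_preimage_eq _ hgf.surjective]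
  have hcov : volume (closedBall a R ∩ f '' E)
      = ∫⁻ x in s, ENNReal.ofReal |(fderiv ℝ f x).det| := by
    rw [← himg]
    exact (lintegral_abs_det_fderiv_eq_addHaar_image volume hs hderiv hinj).symm
  -- Jacobian bounds
  have hJb : ∀ x, 1 - δ ≤ |(fderiv ℝ f x).det| ∧ |(fderiv ℝ f x).det| ≤ 1 + δ := by
    intro x
    have h := abs_le.1 (hδ2 x)
    constructor
    · exact le_trans (by linarith [h.1]) (le_abs_self _)
    · exact abs_le.2 ⟨by linarith [h.1], by linarith [h.2]⟩
  -- upper and lower bounds on the image measure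
  have hup : volume (closedBall a R ∩ f '' E) ≤ ENNReal.ofReal (1 + δ) * volume s := by
    rw [hcov, ← setLIntegral_const]
    exact lintegral_mono fun x => ENNReal.ofReal_le_ofReal (hJb x).2
  have hlo : ENNReal.ofReal (1 - δ) * volume s ≤ volume (closedBall a R ∩ f '' E) := by
    rw [hcov, ← setLIntegral_const]
    exact lintegral_mono fun x => ENNReal.ofReal_le_ofReal (hJb x).1
  -- inclusions
  have hdist : ∀ x, dist (f x) x ≤ δ := fun x => by rw [dist_eq_norm]; exact hδ1 x
  have hsub1 : s ⊆ closedBall a (R + δ) := by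
    intro x hx
    have h1 : dist (f x) a ≤ R := hx.1
    have : dist x a ≤ dist x (f x) + dist (f x) a := dist_triangle _ _ _
    rw [dist_comm x (f x)] at this
    rw [mem_closedBall]
    linarith [hdist x]
  have hsub2 : closedBall a (R - δ) ∩ E ⊆ s := by
    rintro x ⟨hx1, hx2⟩
    refine ⟨?_, hx2⟩
    have h1 : dist x a ≤ R - δ := hx1
    have : dist (f x) a ≤ dist (f x) x + dist x a := dist_triangle _ _ _
    simp only [Set.mem_preimage, mem_closedBall]
    linarith [hdist x]
  -- finiteness
  have hfin : ∀ r : ℝ, volume (closedBall a r) ≠ ⊤ := fun r => measure_closedBall_lt_top.ne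
  have hm1fin : volume (closedBall a R ∩ f '' E) ≠ ⊤ :=
    ne_top_of_le_ne_top (hfin R) (measure_mono Set.inter_subset_left)
  have hm2fin : volume s ≠ ⊤ := ne_top_of_le_ne_top (hfin (R + δ)) (measure_mono hsub1)
  have hm3fin : volume (closedBall a R ∩ E) ≠ ⊤ :=
    ne_top_of_le_ne_top (hfin R) (measure_mono Set.inter_subset_left)
  -- closed ball volume formula
  have hvol : ∀ r : ℝ, 0 ≤ r → (volume (closedBall a r)).toReal = ω * r ^ n := by
    intro r hr
    rw [Measure.addHaar_closedBall volume a hr, ENNReal.toReal_mul,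
      ENNReal.toReal_ofReal (by positivity), hω, finrank_euclideanSpace_fin]
    ring
  set r1 := (volume (closedBall a R ∩ f '' E)).toReal with hr1
  set r2 := (volume s).toReal with hr2
  set r3 := (volume (closedBall a R ∩ E)).toReal with hr3
  have h1 : (1 - δ) * r2 ≤ r1 := by
    have := ENNReal.toReal_mono hm1fin hlo
    rwa [ENNReal.toReal_mul, ENNReal.toReal_ofReal (by linarith)] at this
  have h2 : r1 ≤ (1 + δ) * r2 := by
    have := ENNReal.toReal_mono (ENNReal.mul_ne_top ENNReal.ofReal_ne_top hm2fin) hup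
    rwa [ENNReal.toReal_mul, ENNReal.toReal_ofReal (by linarith)] at this
  -- annuli
  set Ap := closedBall a (R + δ) \ closedBall a R with hAp
  set Am := closedBall a R \ closedBall a (R - δ) with hAm
  have hApfin : volume Ap ≠ ⊤ := ne_top_of_le_ne_top (hfin (R + δ)) (measure_mono Set.diff_subset)
  have hAmfin : volume Am ≠ ⊤ := ne_top_of_le_ne_top (hfin R) (measure_mono Set.diff_subset)
  set vp := (volume Ap).toReal with hvp
  set vm := (volume Am).toReal with hvm
  have hvp0 : 0 ≤ vp := ENNReal.toReal_nonneg
  have hvm0 : 0 ≤ vm := ENNReal.toReal_nonneg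
  have hr20 : 0 ≤ r2 := ENNReal.toReal_nonneg
  have hr30 : 0 ≤ r3 := ENNReal.toReal_nonneg
  -- r3 ≤ r2 + vm
  have h3 : r3 ≤ r2 + vm := by
    have hsub : closedBall a R ∩ E ⊆ s ∪ Am := by
      rintro x ⟨hxB, hxE⟩
      by_cases h : x ∈ closedBall a (R - δ)
      · exact Or.inl (hsub2 ⟨h, hxE⟩)
      · exact Or.inr ⟨hxB, h⟩
    have hle : volume (closedBall a R ∩ E) ≤ volume s + volume Am :=
      (measure_mono hsub).trans (measure_union_le s Am)
    have h' := ENNReal.toReal_mono (by finiteness) hle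
    rwa [ENNReal.toReal_add hm2fin hAmfin] at h'
  -- r2 ≤ r3 + vp
  have h4 : r2 ≤ r3 + vp := by
    have hsub : s ⊆ (closedBall a R ∩ E) ∪ Ap := by
      rintro x hx
      by_cases h : x ∈ closedBall a R
      · exact Or.inl ⟨h, hx.2⟩
      · exact Or.inr ⟨hsub1 hx, h⟩
    have hle : volume s ≤ volume (closedBall a R ∩ E) + volume Ap :=
      (measure_mono hsub).trans (measure_union_le (closedBall a R ∩ E) Ap)
    have h' := ENNReal.toReal_mono (by finiteness) hle
    rwa [ENNReal.toReal_add hm3fin hApfin] at h'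
  -- r3 ≤ ω R^n
  have h5 : r3 ≤ ω * R ^ n := by
    rw [← hvol R hR.le]
    exact ENNReal.toReal_mono (hfin R) (measure_mono Set.inter_subset_left)
  -- bound on vp
  have hRδ : (R : ℝ) ≤ R + δ := by linarith
  have hpow1 : (R + δ) ^ (n - 1) ≤ (R + 1) ^ (n - 1) :=
    pow_le_pow_left₀ (by linarith) (by linarith) _
  have hRpow : R ^ (n - 1) ≤ (R + 1) ^ (n - 1) :=
    pow_le_pow_left₀ hR.le (by linarith) _
  have h6 : vp ≤ n * ω * δ * (R + 1) ^ (n - 1) := by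
    have hd : volume Ap = volume (closedBall a (R + δ)) - volume (closedBall a R) :=
      measure_diff (closedBall_subset_closedBall hRδ)
        measurableSet_closedBall.nullMeasurableSet (hfin R)
    have : vp = ω * (R + δ) ^ n - ω * R ^ n := by
      rw [hvp, hd, ENNReal.toReal_sub_of_le (measure_mono (closedBall_subset_closedBall hRδ))
        (hfin (R + δ)), hvol R hR.le, hvol (R + δ) (by linarith)]
    rw [this]
    have := aux_pow_sub_pow hR.le hRδ n
    have h' : ω * ((R + δ) ^ n - R ^ n) ≤ ω * ((n : ℝ) * δ * (R + 1) ^ (n - 1)) := by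
      apply mul_le_mul_of_nonneg_left _ hω0
      calc (R + δ) ^ n - R ^ n ≤ n * (R + δ - R) * (R + δ) ^ (n - 1) := this
        _ ≤ (n : ℝ) * δ * (R + 1) ^ (n - 1) := by
            have : (R + δ - R) = δ := by ring
            rw [this]
            exact mul_le_mul_of_nonneg_left hpow1 (by positivity)
    nlinarith [h']
  -- bound on vm
  have h7 : vm ≤ n * ω * δ * (R + 1) ^ (n - 1) := by
    by_cases hc : δ ≤ R
    · have hsub : closedBall a (R - δ) ⊆ closedBall a R :=
        closedBall_subset_closedBall (by linarith)
      have hd : volume Am = volume (closedBall a R) - volume (closedBall a (R - δ)) :=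
        measure_diff hsub measurableSet_closedBall.nullMeasurableSet (hfin (R - δ))
      have hveq : vm = ω * R ^ n - ω * (R - δ) ^ n := by
        rw [hvm, hd, ENNReal.toReal_sub_of_le (measure_mono hsub) (hfin R),
          hvol R hR.le, hvol (R - δ) (by linarith)]
      rw [hveq]
      have := aux_pow_sub_pow (a := R - δ) (b := R) (by linarith) (by linarith) n
      have h' : ω * (R ^ n - (R - δ) ^ n) ≤ ω * ((n : ℝ) * δ * (R + 1) ^ (n - 1)) := by
        apply mul_le_mul_of_nonneg_left _ hω0
        calc R ^ n - (R - δ) ^ n ≤ n * (R - (R - δ)) * R ^ (n - 1) := this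
          _ ≤ (n : ℝ) * δ * (R + 1) ^ (n - 1) := by
              have heq : (R - (R - δ)) = δ := by ring
              rw [heq]
              exact mul_le_mul_of_nonneg_left hRpow (by positivity)
      linarith
    · push_neg at hc
      have hvmB : vm ≤ ω * R ^ n := by
        rw [← hvol R hR.le]
        exact ENNReal.toReal_mono (hfin R) (measure_mono Set.diff_subset)
      have hRn : R ^ n = R * R ^ (n - 1) := by
        conv_lhs => rw [← Nat.sub_add_cancel hn]
        rw [pow_succ']
      have key : ω * R ^ n ≤ n * ω * δ * (R + 1) ^ (n - 1) := by
        rw [hRn]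
        have hn1 : (1 : ℝ) ≤ (n : ℝ) := by exact_mod_cast hn
        have hX : (0:ℝ) ≤ ω * (δ * (R + 1) ^ (n - 1)) := by positivity
        have step1 : ω * (R * R ^ (n - 1)) ≤ ω * (δ * (R + 1) ^ (n - 1)) :=
          mul_le_mul_of_nonneg_left (mul_le_mul hc.le hRpow (by positivity) hδ0) hω0
        have step2 : 1 * (ω * (δ * (R + 1) ^ (n - 1)))
            ≤ (n : ℝ) * (ω * (δ * (R + 1) ^ (n - 1))) :=
          mul_le_mul_of_nonneg_right hn1 hX
        linarith
      linarith
  -- final arithmetic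
  have hmax : 2 * n * ω * (R + 1) ^ (n - 1)
      ≤ max ((2 : ℝ) ^ n * ω) (2 * n * ω * (R + 1) ^ (n - 1)) := le_max_right _ _
  have h4d : δ * r2 ≤ δ * r3 + δ * vp := by
    have := mul_le_mul_of_nonneg_left h4 hδ0
    rw [mul_add] at this
    exact this
  have h5d : δ * r3 ≤ δ * (ω * R ^ n) := mul_le_mul_of_nonneg_left h5 hδ0
  have hdvp : δ * vp ≤ vp := by
    have := mul_nonneg (sub_nonneg.2 hδlt.le) hvp0
    linarith
  have hgoal : |r1 - r3| ≤ δ * (ω * R ^ n) + δ * (2 * n * ω * (R + 1) ^ (n - 1)) := by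
    rw [abs_le]
    constructor
    · linarith
    · linarith
  calc |r1 - r3| ≤ δ * (ω * R ^ n) + δ * (2 * n * ω * (R + 1) ^ (n - 1)) := hgoal
    _ ≤ δ * (ω * R ^ n) + δ * max ((2:ℝ) ^ n * ω) (2 * n * ω * (R + 1) ^ (n - 1)) := by
        have := mul_le_mul_of_nonneg_left hmax hδ0
        linarith
    _ = δ * (ω * R ^ n + max ((2:ℝ) ^ n * ω) (2 * n * ω * (R + 1) ^ (n - 1))) := by ring
end

section
/- Let (f_j)_{j∈ℕ} be a sequence of nonincreasing functions ℝ → ℝ. Assume there exists a dense set A ⊆ ℝ such that for every t ∈ A the sequence (f_j(t))_j converges. Then there exists a set S ⊆ ℝ whose complement is countable such that (f_j(t))_j converges for every t ∈ S, and the pointwise limit function is nonincreasing on S. -/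
open Filter

/-- If `(f_j)` are nonincreasing functions ℝ → ℝ converging pointwise on a
dense set `A`, then they converge on a set `S` with countable complement, and the limit is
nonincreasing on `S`. -/
theorem stmt4 (f : ℕ → ℝ → ℝ) (hmono : ∀ j, Antitone (f j))
    (A : Set ℝ) (hA : Dense A)
    (hconv : ∀ t ∈ A, ∃ l : ℝ, Tendsto (fun j => f j t) atTop (nhds l)) :
    ∃ (S : Set ℝ) (g : ℝ → ℝ), Sᶜ.Countable ∧
      (∀ t ∈ S, Tendsto (fun j => f j t) atTop (nhds (g t))) ∧
      AntitoneOn g S := by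
  classical
  set g : ℝ → ℝ := fun a => if h : a ∈ A then (hconv a h).choose else 0 with hgdef
  have hgA : ∀ a ∈ A, Tendsto (fun j => f j a) atTop (nhds (g a)) := by
    intro a ha
    simp only [hgdef, dif_pos ha]
    exact (hconv a ha).choose_spec
  have hganti : ∀ a ∈ A, ∀ b ∈ A, a ≤ b → g b ≤ g a := by
    intro a ha b hb hab
    exact le_of_tendsto_of_tendsto' (hgA b hb) (hgA a ha) fun j => hmono j hab
  have hbelow : ∀ t : ℝ, ∃ a, a ∈ A ∧ a < t := by
    intro t
    obtain ⟨c, hc, hc2⟩ := hA.exists_between (show t - 1 < t by linarith)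
    exact ⟨c, hc, hc2.2⟩
  have habove : ∀ t : ℝ, ∃ a, a ∈ A ∧ t < a := by
    intro t
    obtain ⟨c, hc, hc2⟩ := hA.exists_between (show t < t + 1 by linarith)
    exact ⟨c, hc, hc2.1⟩
  set U : ℝ → Set ℝ := fun t => g '' {a | a ∈ A ∧ t < a} with hU
  set V : ℝ → Set ℝ := fun t => g '' {a | a ∈ A ∧ a < t} with hV
  set G : ℝ → ℝ := fun t => sSup (U t) with hGdef
  set H : ℝ → ℝ := fun t => sInf (V t) with hHdef
  have hUne : ∀ t, (U t).Nonempty := by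
    intro t; obtain ⟨a, ha, hat⟩ := habove t; exact ⟨g a, a, ⟨ha, hat⟩, rfl⟩
  have hVne : ∀ t, (V t).Nonempty := by
    intro t; obtain ⟨a, ha, hat⟩ := hbelow t; exact ⟨g a, a, ⟨ha, hat⟩, rfl⟩
  have hUbdd : ∀ t, BddAbove (U t) := by
    intro t
    obtain ⟨a₀, ha₀, ha₀t⟩ := hbelow t
    refine ⟨g a₀, ?_⟩
    rintro x ⟨b, ⟨hb, htb⟩, rfl⟩
    exact hganti a₀ ha₀ b hb (le_of_lt (ha₀t.trans htb))
  have hVbdd : ∀ t, BddBelow (V t) := by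
    intro t
    obtain ⟨b₀, hb₀, htb₀⟩ := habove t
    refine ⟨g b₀, ?_⟩
    rintro x ⟨a, ⟨ha, hat⟩, rfl⟩
    exact hganti a ha b₀ hb₀ (le_of_lt (hat.trans htb₀))
  have hGle : ∀ t, ∀ a ∈ A, a < t → G t ≤ g a := by
    intro t a ha hat
    apply csSup_le (hUne t)
    rintro x ⟨b, ⟨hb, htb⟩, rfl⟩
    exact hganti a ha b hb (le_of_lt (hat.trans htb))
  have hleH : ∀ t, ∀ b ∈ A, t < b → g b ≤ H t := by
    intro t b hb htb
    apply le_csInf (hVne t)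
    rintro x ⟨a, ⟨ha, hat⟩, rfl⟩
    exact hganti a ha b hb (le_of_lt (hat.trans htb))
  have hGH : ∀ t, G t ≤ H t := by
    intro t
    apply csSup_le (hUne t)
    rintro x ⟨b, ⟨hb, htb⟩, rfl⟩
    exact hleH t b hb htb
  have hdisj : ∀ s t : ℝ, s < t → H t ≤ G s := by
    intro s t hst
    obtain ⟨a, ha, ha2⟩ := hA.exists_between hst
    calc H t ≤ g a := csInf_le (hVbdd t) ⟨a, ⟨ha, ha2.2⟩, rfl⟩
      _ ≤ G s := le_csSup (hUbdd s) ⟨a, ⟨ha, ha2.1⟩, rfl⟩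
  have hGanti : Antitone G := by
    intro s t hst
    apply csSup_le_csSup (hUbdd s) (hUne t)
    rintro x ⟨b, ⟨hb, htb⟩, rfl⟩
    exact ⟨b, ⟨hb, lt_of_le_of_lt hst htb⟩, rfl⟩
  refine ⟨{t | G t = H t}, G, ?_, ?_, ?_⟩
  · -- countability of the bad set
    have : ∀ t : ({t : ℝ | G t = H t}ᶜ : Set ℝ), ∃ q : ℚ, G t < q ∧ (q : ℝ) < H t := by
      rintro ⟨t, ht⟩
      have hlt : G t < H t := lt_of_le_of_ne (hGH t) ht
      exact_mod_cast exists_rat_btwn hlt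
    choose q hq1 hq2 using this
    have hinj : Function.Injective q := by
      intro s t hqst
      by_contra hne
      have hne' : (s : ℝ) ≠ (t : ℝ) := fun h => hne (Subtype.ext h)
      rcases hne'.lt_or_gt with h | h
      · have : (q t : ℝ) < q s := lt_of_lt_of_le (hq2 t) ((hdisj s t h).trans (hq1 s).le)
        rw [hqst] at this; exact lt_irrefl _ this
      · have : (q s : ℝ) < q t := lt_of_lt_of_le (hq2 s) ((hdisj t s h).trans (hq1 t).le)
        rw [hqst] at this; exact lt_irrefl _ this
    exact Set.countable_coe_iff.mp (Function.Injective.countable hinj)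
  · -- convergence on S
    intro t ht
    have htGH : G t = H t := ht
    rw [tendsto_order]
    constructor
    · intro x hx
      obtain ⟨y, ⟨b, ⟨hb, htb⟩, rfl⟩, hxy⟩ := exists_lt_of_lt_csSup (hUne t) hx
      filter_upwards [(hgA b hb).eventually (eventually_gt_nhds hxy)] with j hj
      exact lt_of_lt_of_le hj (hmono j htb.le)
    · intro x hx
      rw [htGH] at hx
      obtain ⟨y, ⟨a, ⟨ha, hat⟩, rfl⟩, hxy⟩ := exists_lt_of_csInf_lt (hVne t) hx
      filter_upwards [(hgA a ha).eventually (eventually_lt_nhds hxy)] with j hj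
      exact lt_of_le_of_lt (hmono j hat.le) hj
  · exact fun s _ t _ hst => hGanti hst
end
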